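/- Let X be a real normed space and let x, y be nonzero elements of X. Then the angular distance satisfies ‖x/‖x‖ − y/‖y‖‖ ≤ 4‖x−y‖/(‖x‖+‖y‖). -/

import Mathlib

private lemma dw_aux {X : Type*} [NormedAddCommGroup X] [NormedSpace ℝ X]
    (x y : X) (hx : x ≠ 0) (hy : y ≠ 0) :
    ‖‖x‖⁻¹ • x - ‖y‖⁻¹ • y‖ ≤ 2 * ‖x - y‖ / ‖x‖ := by
  have hx' : (0:ℝ) < ‖x‖ := norm_pos_iff.mpr hx
  have hy' : (0:ℝ) < ‖y‖ := norm_pos_iff.mpr hy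
  have key : ‖‖x‖⁻¹ • x - ‖y‖⁻¹ • y‖ = ‖x‖⁻¹ * ‖x - (‖x‖ * ‖y‖⁻¹) • y‖ := by
    rw [show x - (‖x‖ * ‖y‖⁻¹) • y = ‖x‖ • (‖x‖⁻¹ • x - ‖y‖⁻¹ • y) by
      rw [smul_sub, smul_smul, smul_smul]; congr 2 <;> field_simp <;> rw [one_smul],
      norm_smul, Real.norm_eq_abs, abs_of_pos hx']
    field_simp
  rw [key]
  have h1 : ‖x - (‖x‖ * ‖y‖⁻¹) • y‖ ≤ ‖x - y‖ + ‖y - (‖x‖ * ‖y‖⁻¹) • y‖ := by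
    calc ‖x - (‖x‖ * ‖y‖⁻¹) • y‖ = ‖(x - y) + (y - (‖x‖ * ‖y‖⁻¹) • y)‖ := by congr 1; abel
      _ ≤ _ := norm_add_le _ _
  have h2 : ‖y - (‖x‖ * ‖y‖⁻¹) • y‖ = |‖y‖ - ‖x‖| := by
    have : y - (‖x‖ * ‖y‖⁻¹) • y = (1 - ‖x‖ * ‖y‖⁻¹) • y := by
      rw [sub_smul, one_smul]
    rw [this, norm_smul, Real.norm_eq_abs]
    rw [show |1 - ‖x‖ * ‖y‖⁻¹| * ‖y‖ = |(1 - ‖x‖ * ‖y‖⁻¹) * ‖y‖| by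
      rw [abs_mul, abs_of_pos hy']]
    congr 1
    field_simp
  have h3 : |‖y‖ - ‖x‖| ≤ ‖x - y‖ := by
    rw [abs_sub_comm]; exact abs_norm_sub_norm_le x y
  have : ‖x - (‖x‖ * ‖y‖⁻¹) • y‖ ≤ 2 * ‖x - y‖ := by
    calc ‖x - (‖x‖ * ‖y‖⁻¹) • y‖ ≤ ‖x - y‖ + |‖y‖ - ‖x‖| := by rw [← h2]; exact h1
      _ ≤ ‖x - y‖ + ‖x - y‖ := by linarith
      _ = 2 * ‖x - y‖ := by ring
  rw [div_eq_inv_mul]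
  exact mul_le_mul_of_nonneg_left this (le_of_lt (inv_pos.mpr hx'))

theorem dunkl_williams {X : Type*} [NormedAddCommGroup X] [NormedSpace ℝ X]
    (x y : X) (hx : x ≠ 0) (hy : y ≠ 0) :
    ‖‖x‖⁻¹ • x - ‖y‖⁻¹ • y‖ ≤ 4 * ‖x - y‖ / (‖x‖ + ‖y‖) := by
  have hx' : (0:ℝ) < ‖x‖ := norm_pos_iff.mpr hx
  have hy' : (0:ℝ) < ‖y‖ := norm_pos_iff.mpr hy
  have hxy : ‖x - y‖ = ‖y - x‖ := norm_sub_rev x y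
  rcases le_total ‖x‖ ‖y‖ with h | h
  · have := dw_aux y x hy hx
    rw [norm_sub_rev] at this
    calc ‖‖x‖⁻¹ • x - ‖y‖⁻¹ • y‖ ≤ 2 * ‖y - x‖ / ‖y‖ := this
      _ ≤ 4 * ‖x - y‖ / (‖x‖ + ‖y‖) := by
        rw [hxy, div_le_div_iff₀ hy' (by linarith)]
        nlinarith [norm_nonneg (y - x)]
  · have := dw_aux x y hx hy
    calc ‖‖x‖⁻¹ • x - ‖y‖⁻¹ • y‖ ≤ 2 * ‖x - y‖ / ‖x‖ := this
      _ ≤ 4 * ‖x - y‖ / (‖x‖ + ‖y‖) := by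
        rw [div_le_div_iff₀ hx' (by linarith)]
        nlinarith [norm_nonneg (x - y)]
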